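/- S(λ) = (H·λ)^{s′} is the gradient (with respect to the Frobenius inner product on harmonic fourth-order tensors) of the function H ↦ (1/2) λ : d₂'(H), where d₂(H)_{ij} = H_{ipqr}H_{pqrj} and d₂' is its deviator; i.e., for all harmonic fourth-order δH, d/dt|₀ (1/2)λ:d₂'(H+t δH) = S(λ) :: δH. -/
import Mathlib


/-- Fourth-order tensors on `ℝ³`. -/
abbrev T4 := Fin 3 → Fin 3 → Fin 3 → Fin 3 → ℝ

/-- Kronecker delta on `Fin 3`. -/
noncomputable def kd (i j : Fin 3) : ℝ := if i = j then 1 else 0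

/-- Total symmetrization of a fourth-order tensor. -/
noncomputable def tsym (T : T4) : T4 := fun i j k l =>
  (∑ σ : Equiv.Perm (Fin 4),
    T (![i, j, k, l] (σ 0)) (![i, j, k, l] (σ 1))
      (![i, j, k, l] (σ 2)) (![i, j, k, l] (σ 3))) / 24

/-- Symmetrized tensor product `Id ⊙ a` of the identity with a symmetric
second-order tensor `a`. -/
noncomputable def idSym (a : Fin 3 → Fin 3 → ℝ) : T4 := fun i j k l =>
  (kd i j * a k l + kd i k * a j l + kd i l * a j k
    + kd k l * a i j + kd j l * a i k + kd j k * a i l) / 6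

/-- `H` is totally symmetric. -/
def TotSymm (H : T4) : Prop :=
  ∀ i j k l, H i j k l = H j i k l ∧ H i j k l = H i k j l ∧
    H i j k l = H i j l k ∧ H i j k l = H k l i j

/-- `H` is traceless. -/
def Traceless4 (H : T4) : Prop := ∀ k l, ∑ i : Fin 3, H i i k l = 0

/-- The double contraction `(H : λ)_{ij} = H_{ijkl} λ_{kl}`. -/
def dc (H : T4) (lam : Fin 3 → Fin 3 → ℝ) : Fin 3 → Fin 3 → ℝ :=
  fun i j => ∑ k : Fin 3, ∑ l : Fin 3, H i j k l * lam k l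

/-- The tensor with components `H_{ijkp} λ_{pl}`. -/
def mulR (H : T4) (lam : Fin 3 → Fin 3 → ℝ) : T4 :=
  fun i j k l => ∑ p : Fin 3, H i j k p * lam p l

/-- `S(λ) = (H·λ)^s − (3/7) Id ⊙ (H:λ)`. -/
noncomputable def Sten (H : T4) (lam : Fin 3 → Fin 3 → ℝ) : T4 := fun i j k l =>
  tsym (mulR H lam) i j k l - (3 / 7) * idSym (dc H lam) i j k l

/-- The quadratic covariant `d₂(H)_{ij} = H_{ipqr} H_{pqrj}`. -/
def d2 (H : T4) : Fin 3 → Fin 3 → ℝ := fun i j =>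
  ∑ p : Fin 3, ∑ q : Fin 3, ∑ r : Fin 3, H i p q r * H p q r j

/-- Deviatoric part of a second-order tensor. -/
noncomputable def dev (a : Fin 3 → Fin 3 → ℝ) : Fin 3 → Fin 3 → ℝ := fun i j =>
  a i j - (∑ k : Fin 3, a k k) / 3 * kd i j

def e4 : (Fin 4 → Fin 3) ≃ (Fin 3 × Fin 3 × Fin 3 × Fin 3) where
  toFun f := (f 0, f 1, f 2, f 3)
  invFun p := ![p.1, p.2.1, p.2.2.1, p.2.2.2]
  left_inv f := by funext i; fin_cases i <;> rfl
  right_inv p := rfl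

lemma sum4_comp (Φ : (Fin 4 → Fin 3) → ℝ) :
    (∑ i : Fin 3, ∑ j : Fin 3, ∑ k : Fin 3, ∑ l : Fin 3, Φ ![i, j, k, l])
      = ∑ f : Fin 4 → Fin 3, Φ f := by
  have h := Fintype.sum_equiv e4 Φ (fun p => Φ ![p.1, p.2.1, p.2.2.1, p.2.2.2])
    (fun f => by
      congr 1
      funext i
      fin_cases i <;> rfl)
  rw [h]
  simp only [Fintype.sum_prod_type]

lemma sum_perm_comp (σ : Equiv.Perm (Fin 4)) (Φ : (Fin 4 → Fin 3) → ℝ) :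
    (∑ f : Fin 4 → Fin 3, Φ (f ∘ σ)) = ∑ f : Fin 4 → Fin 3, Φ f :=
  Fintype.sum_equiv (Equiv.arrowCongr σ.symm (Equiv.refl (Fin 3))) _ _
    (fun f => rfl)

lemma perm_invariant (T : T4) (hT : TotSymm T) (σ : Equiv.Perm (Fin 4)) :
    ∀ v : Fin 4 → Fin 3,
      T (v (σ 0)) (v (σ 1)) (v (σ 2)) (v (σ 3)) = T (v 0) (v 1) (v 2) (v 3) := by
  have s12 : ∀ a b c d, T a b c d = T b a c d := fun a b c d => (hT a b c d).1
  have s23 : ∀ a b c d, T a b c d = T a c b d := fun a b c d => (hT a b c d).2.1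
  have s34 : ∀ a b c d, T a b c d = T a b d c := fun a b c d => (hT a b c d).2.2.1
  refine Equiv.Perm.swap_induction_on σ (fun v => rfl) ?_
  intro f x y hxy ih v
  have step : ∀ w : Fin 4 → Fin 3,
      T (w (Equiv.swap x y 0)) (w (Equiv.swap x y 1)) (w (Equiv.swap x y 2)) (w (Equiv.swap x y 3))
        = T (w 0) (w 1) (w 2) (w 3) := by
    intro w
    fin_cases x <;> fin_cases y <;>
      simp (config := { decide := true }) only [Equiv.swap_apply_def, if_true, if_false] <;>
      first
        | (exact rfl)
        | (exact (s12 _ _ _ _).symm)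
        | (exact (s23 _ _ _ _).symm)
        | (exact (s34 _ _ _ _).symm)
        | (rw [s23, s12, s23] <;> try exact rfl
           done)
        | (rw [s23, s34, s23] <;> try exact rfl
           done)
        | (rw [s12, s23, s34, s23, s12] <;> try exact rfl
           done)
  calc T (v ((Equiv.swap x y * f) 0)) (v ((Equiv.swap x y * f) 1))
        (v ((Equiv.swap x y * f) 2)) (v ((Equiv.swap x y * f) 3))
      = T ((v ∘ Equiv.swap x y) (f 0)) ((v ∘ Equiv.swap x y) (f 1))
          ((v ∘ Equiv.swap x y) (f 2)) ((v ∘ Equiv.swap x y) (f 3)) := rfl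
    _ = T ((v ∘ Equiv.swap x y) 0) ((v ∘ Equiv.swap x y) 1)
          ((v ∘ Equiv.swap x y) 2) ((v ∘ Equiv.swap x y) 3) := ih _
    _ = T (v 0) (v 1) (v 2) (v 3) := step v


lemma contract_tsym (T U : T4) (hU : TotSymm U) :
    (∑ i : Fin 3, ∑ j : Fin 3, ∑ k : Fin 3, ∑ l : Fin 3, tsym T i j k l * U i j k l)
      = ∑ i : Fin 3, ∑ j : Fin 3, ∑ k : Fin 3, ∑ l : Fin 3, T i j k l * U i j k l := by
  have hv : ∀ f : Fin 4 → Fin 3, ![f 0, f 1, f 2, f 3] = f := by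
    intro f; funext i; fin_cases i <;> rfl
  have e1 : (∑ i : Fin 3, ∑ j : Fin 3, ∑ k : Fin 3, ∑ l : Fin 3, tsym T i j k l * U i j k l)
      = ∑ f : Fin 4 → Fin 3, tsym T (f 0) (f 1) (f 2) (f 3) * U (f 0) (f 1) (f 2) (f 3) :=
    sum4_comp (fun f => tsym T (f 0) (f 1) (f 2) (f 3) * U (f 0) (f 1) (f 2) (f 3))
  have e3 : (∑ i : Fin 3, ∑ j : Fin 3, ∑ k : Fin 3, ∑ l : Fin 3, T i j k l * U i j k l)
      = ∑ f : Fin 4 → Fin 3, T (f 0) (f 1) (f 2) (f 3) * U (f 0) (f 1) (f 2) (f 3) :=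
    sum4_comp (fun f => T (f 0) (f 1) (f 2) (f 3) * U (f 0) (f 1) (f 2) (f 3))
  rw [e1, e3]
  have e2 : ∀ f : Fin 4 → Fin 3,
      tsym T (f 0) (f 1) (f 2) (f 3) * U (f 0) (f 1) (f 2) (f 3)
        = ∑ σ : Equiv.Perm (Fin 4),
            T (f (σ 0)) (f (σ 1)) (f (σ 2)) (f (σ 3)) * U (f 0) (f 1) (f 2) (f 3) / 24 := by
    intro f
    simp only [tsym, hv]
    rw [div_mul_eq_mul_div, Finset.sum_mul, Finset.sum_div]
  rw [Finset.sum_congr rfl (fun f _ => e2 f), Finset.sum_comm]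
  have e5 : ∀ σ : Equiv.Perm (Fin 4),
      (∑ f : Fin 4 → Fin 3, T (f (σ 0)) (f (σ 1)) (f (σ 2)) (f (σ 3)) * U (f 0) (f 1) (f 2) (f 3) / 24)
        = (∑ f : Fin 4 → Fin 3, T (f 0) (f 1) (f 2) (f 3) * U (f 0) (f 1) (f 2) (f 3)) / 24 := by
    intro σ
    rw [← Finset.sum_div]
    congr 1
    have e6 : ∀ f : Fin 4 → Fin 3,
        T (f (σ 0)) (f (σ 1)) (f (σ 2)) (f (σ 3)) * U (f 0) (f 1) (f 2) (f 3)
          = (fun g : Fin 4 → Fin 3 =>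
              T (g 0) (g 1) (g 2) (g 3) * U (g 0) (g 1) (g 2) (g 3)) (f ∘ σ) := by
      intro f
      have hU' := perm_invariant U hU σ f
      simp only [Function.comp]
      rw [hU']
    rw [Finset.sum_congr rfl (fun f _ => e6 f),
      sum_perm_comp σ (fun g => T (g 0) (g 1) (g 2) (g 3) * U (g 0) (g 1) (g 2) (g 3))]
  rw [Finset.sum_congr rfl (fun σ _ => e5 σ), Finset.sum_const, Finset.card_univ,
    Fintype.card_perm, Fintype.card_fin]
  norm_num [Nat.factorial]
  ring

set_option maxHeartbeats 2000000 in
lemma idsym_contract (a : Fin 3 → Fin 3 → ℝ) (U : T4) (hU : TotSymm U) (hUtr : Traceless4 U) :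
    (∑ i : Fin 3, ∑ j : Fin 3, ∑ k : Fin 3, ∑ l : Fin 3, idSym a i j k l * U i j k l) = 0 := by
  have u0010 : U 0 0 1 0 = U 0 0 0 1 := by rw [(hU 0 0 1 0).2.2.1]
  have u0020 : U 0 0 2 0 = U 0 0 0 2 := by rw [(hU 0 0 2 0).2.2.1]
  have u0021 : U 0 0 2 1 = U 0 0 1 2 := by rw [(hU 0 0 2 1).2.2.1]
  have u0100 : U 0 1 0 0 = U 0 0 0 1 := by rw [(hU 0 1 0 0).2.1, (hU 0 0 1 0).2.2.1]
  have u0101 : U 0 1 0 1 = U 0 0 1 1 := by rw [(hU 0 1 0 1).2.1]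
  have u0102 : U 0 1 0 2 = U 0 0 1 2 := by rw [(hU 0 1 0 2).2.1]
  have u0110 : U 0 1 1 0 = U 0 0 1 1 := by rw [(hU 0 1 1 0).2.2.1, (hU 0 1 0 1).2.1]
  have u0120 : U 0 1 2 0 = U 0 0 1 2 := by rw [(hU 0 1 2 0).2.2.1, (hU 0 1 0 2).2.1]
  have u0121 : U 0 1 2 1 = U 0 1 1 2 := by rw [(hU 0 1 2 1).2.2.1]
  have u0200 : U 0 2 0 0 = U 0 0 0 2 := by rw [(hU 0 2 0 0).2.1, (hU 0 0 2 0).2.2.1]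
  have u0201 : U 0 2 0 1 = U 0 0 1 2 := by rw [(hU 0 2 0 1).2.1, (hU 0 0 2 1).2.2.1]
  have u0202 : U 0 2 0 2 = U 0 0 2 2 := by rw [(hU 0 2 0 2).2.1]
  have u0210 : U 0 2 1 0 = U 0 0 1 2 := by rw [(hU 0 2 1 0).2.1, (hU 0 1 2 0).2.2.1, (hU 0 1 0 2).2.1]
  have u0211 : U 0 2 1 1 = U 0 1 1 2 := by rw [(hU 0 2 1 1).2.1, (hU 0 1 2 1).2.2.1]
  have u0212 : U 0 2 1 2 = U 0 1 2 2 := by rw [(hU 0 2 1 2).2.1]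
  have u0220 : U 0 2 2 0 = U 0 0 2 2 := by rw [(hU 0 2 2 0).2.2.1, (hU 0 2 0 2).2.1]
  have u0221 : U 0 2 2 1 = U 0 1 2 2 := by rw [(hU 0 2 2 1).2.2.1, (hU 0 2 1 2).2.1]
  have u1000 : U 1 0 0 0 = U 0 0 0 1 := by rw [(hU 1 0 0 0).1, (hU 0 1 0 0).2.1, (hU 0 0 1 0).2.2.1]
  have u1001 : U 1 0 0 1 = U 0 0 1 1 := by rw [(hU 1 0 0 1).1, (hU 0 1 0 1).2.1]
  have u1002 : U 1 0 0 2 = U 0 0 1 2 := by rw [(hU 1 0 0 2).1, (hU 0 1 0 2).2.1]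
  have u1010 : U 1 0 1 0 = U 0 0 1 1 := by rw [(hU 1 0 1 0).1, (hU 0 1 1 0).2.2.1, (hU 0 1 0 1).2.1]
  have u1011 : U 1 0 1 1 = U 0 1 1 1 := by rw [(hU 1 0 1 1).1]
  have u1012 : U 1 0 1 2 = U 0 1 1 2 := by rw [(hU 1 0 1 2).1]
  have u1020 : U 1 0 2 0 = U 0 0 1 2 := by rw [(hU 1 0 2 0).1, (hU 0 1 2 0).2.2.1, (hU 0 1 0 2).2.1]
  have u1021 : U 1 0 2 1 = U 0 1 1 2 := by rw [(hU 1 0 2 1).1, (hU 0 1 2 1).2.2.1]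
  have u1022 : U 1 0 2 2 = U 0 1 2 2 := by rw [(hU 1 0 2 2).1]
  have u1100 : U 1 1 0 0 = U 0 0 1 1 := by rw [(hU 1 1 0 0).2.1, (hU 1 0 1 0).2.2.1, (hU 1 0 0 1).1, (hU 0 1 0 1).2.1]
  have u1101 : U 1 1 0 1 = U 0 1 1 1 := by rw [(hU 1 1 0 1).2.1, (hU 1 0 1 1).1]
  have u1102 : U 1 1 0 2 = U 0 1 1 2 := by rw [(hU 1 1 0 2).2.1, (hU 1 0 1 2).1]
  have u1110 : U 1 1 1 0 = U 0 1 1 1 := by rw [(hU 1 1 1 0).2.2.1, (hU 1 1 0 1).2.1, (hU 1 0 1 1).1]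
  have u1120 : U 1 1 2 0 = U 0 1 1 2 := by rw [(hU 1 1 2 0).2.2.1, (hU 1 1 0 2).2.1, (hU 1 0 1 2).1]
  have u1121 : U 1 1 2 1 = U 1 1 1 2 := by rw [(hU 1 1 2 1).2.2.1]
  have u1200 : U 1 2 0 0 = U 0 0 1 2 := by rw [(hU 1 2 0 0).2.1, (hU 1 0 2 0).2.2.1, (hU 1 0 0 2).1, (hU 0 1 0 2).2.1]
  have u1201 : U 1 2 0 1 = U 0 1 1 2 := by rw [(hU 1 2 0 1).2.1, (hU 1 0 2 1).2.2.1, (hU 1 0 1 2).1]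
  have u1202 : U 1 2 0 2 = U 0 1 2 2 := by rw [(hU 1 2 0 2).2.1, (hU 1 0 2 2).1]
  have u1210 : U 1 2 1 0 = U 0 1 1 2 := by rw [(hU 1 2 1 0).2.1, (hU 1 1 2 0).2.2.1, (hU 1 1 0 2).2.1, (hU 1 0 1 2).1]
  have u1211 : U 1 2 1 1 = U 1 1 1 2 := by rw [(hU 1 2 1 1).2.1, (hU 1 1 2 1).2.2.1]
  have u1212 : U 1 2 1 2 = U 1 1 2 2 := by rw [(hU 1 2 1 2).2.1]
  have u1220 : U 1 2 2 0 = U 0 1 2 2 := by rw [(hU 1 2 2 0).2.2.1, (hU 1 2 0 2).2.1, (hU 1 0 2 2).1]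
  have u1221 : U 1 2 2 1 = U 1 1 2 2 := by rw [(hU 1 2 2 1).2.2.1, (hU 1 2 1 2).2.1]
  have u2000 : U 2 0 0 0 = U 0 0 0 2 := by rw [(hU 2 0 0 0).1, (hU 0 2 0 0).2.1, (hU 0 0 2 0).2.2.1]
  have u2001 : U 2 0 0 1 = U 0 0 1 2 := by rw [(hU 2 0 0 1).1, (hU 0 2 0 1).2.1, (hU 0 0 2 1).2.2.1]
  have u2002 : U 2 0 0 2 = U 0 0 2 2 := by rw [(hU 2 0 0 2).1, (hU 0 2 0 2).2.1]
  have u2010 : U 2 0 1 0 = U 0 0 1 2 := by rw [(hU 2 0 1 0).1, (hU 0 2 1 0).2.1, (hU 0 1 2 0).2.2.1, (hU 0 1 0 2).2.1]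
  have u2011 : U 2 0 1 1 = U 0 1 1 2 := by rw [(hU 2 0 1 1).1, (hU 0 2 1 1).2.1, (hU 0 1 2 1).2.2.1]
  have u2012 : U 2 0 1 2 = U 0 1 2 2 := by rw [(hU 2 0 1 2).1, (hU 0 2 1 2).2.1]
  have u2020 : U 2 0 2 0 = U 0 0 2 2 := by rw [(hU 2 0 2 0).1, (hU 0 2 2 0).2.2.1, (hU 0 2 0 2).2.1]
  have u2021 : U 2 0 2 1 = U 0 1 2 2 := by rw [(hU 2 0 2 1).1, (hU 0 2 2 1).2.2.1, (hU 0 2 1 2).2.1]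
  have u2022 : U 2 0 2 2 = U 0 2 2 2 := by rw [(hU 2 0 2 2).1]
  have u2100 : U 2 1 0 0 = U 0 0 1 2 := by rw [(hU 2 1 0 0).1, (hU 1 2 0 0).2.1, (hU 1 0 2 0).2.2.1, (hU 1 0 0 2).1, (hU 0 1 0 2).2.1]
  have u2101 : U 2 1 0 1 = U 0 1 1 2 := by rw [(hU 2 1 0 1).1, (hU 1 2 0 1).2.1, (hU 1 0 2 1).2.2.1, (hU 1 0 1 2).1]
  have u2102 : U 2 1 0 2 = U 0 1 2 2 := by rw [(hU 2 1 0 2).1, (hU 1 2 0 2).2.1, (hU 1 0 2 2).1]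
  have u2110 : U 2 1 1 0 = U 0 1 1 2 := by rw [(hU 2 1 1 0).1, (hU 1 2 1 0).2.1, (hU 1 1 2 0).2.2.1, (hU 1 1 0 2).2.1, (hU 1 0 1 2).1]
  have u2111 : U 2 1 1 1 = U 1 1 1 2 := by rw [(hU 2 1 1 1).1, (hU 1 2 1 1).2.1, (hU 1 1 2 1).2.2.1]
  have u2112 : U 2 1 1 2 = U 1 1 2 2 := by rw [(hU 2 1 1 2).1, (hU 1 2 1 2).2.1]
  have u2120 : U 2 1 2 0 = U 0 1 2 2 := by rw [(hU 2 1 2 0).1, (hU 1 2 2 0).2.2.1, (hU 1 2 0 2).2.1, (hU 1 0 2 2).1]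
  have u2121 : U 2 1 2 1 = U 1 1 2 2 := by rw [(hU 2 1 2 1).1, (hU 1 2 2 1).2.2.1, (hU 1 2 1 2).2.1]
  have u2122 : U 2 1 2 2 = U 1 2 2 2 := by rw [(hU 2 1 2 2).1]
  have u2200 : U 2 2 0 0 = U 0 0 2 2 := by rw [(hU 2 2 0 0).2.1, (hU 2 0 2 0).2.2.1, (hU 2 0 0 2).1, (hU 0 2 0 2).2.1]
  have u2201 : U 2 2 0 1 = U 0 1 2 2 := by rw [(hU 2 2 0 1).2.1, (hU 2 0 2 1).2.2.1, (hU 2 0 1 2).1, (hU 0 2 1 2).2.1]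
  have u2202 : U 2 2 0 2 = U 0 2 2 2 := by rw [(hU 2 2 0 2).2.1, (hU 2 0 2 2).1]
  have u2210 : U 2 2 1 0 = U 0 1 2 2 := by rw [(hU 2 2 1 0).2.1, (hU 2 1 2 0).2.2.1, (hU 2 1 0 2).1, (hU 1 2 0 2).2.1, (hU 1 0 2 2).1]
  have u2211 : U 2 2 1 1 = U 1 1 2 2 := by rw [(hU 2 2 1 1).2.1, (hU 2 1 2 1).2.2.1, (hU 2 1 1 2).1, (hU 1 2 1 2).2.1]
  have u2212 : U 2 2 1 2 = U 1 2 2 2 := by rw [(hU 2 2 1 2).2.1, (hU 2 1 2 2).1]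
  have u2220 : U 2 2 2 0 = U 0 2 2 2 := by rw [(hU 2 2 2 0).2.2.1, (hU 2 2 0 2).2.1, (hU 2 0 2 2).1]
  have u2221 : U 2 2 2 1 = U 1 2 2 2 := by rw [(hU 2 2 2 1).2.2.1, (hU 2 2 1 2).2.1, (hU 2 1 2 2).1]
  have ctr00 : U 0 0 0 0 + U 0 0 1 1 + U 0 0 2 2 = 0 := by
    have h := hUtr 0 0
    rw [Fin.sum_univ_three] at h
    try simp only [u0010, u0020, u0021, u0100, u0101, u0102, u0110, u0120, u0121, u0200, u0201, u0202, u0210, u0211, u0212, u0220, u0221, u1000, u1001, u1002, u1010, u1011, u1012, u1020, u1021, u1022, u1100, u1101, u1102, u1110, u1120, u1121, u1200, u1201, u1202, u1210, u1211, u1212, u1220, u1221, u2000, u2001, u2002, u2010, u2011, u2012, u2020, u2021, u2022, u2100, u2101, u2102, u2110, u2111, u2112, u2120, u2121, u2122, u2200, u2201, u2202, u2210, u2211, u2212, u2220, u2221] at h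
    linear_combination h
  have ctr01 : U 0 0 0 1 + U 0 1 1 1 + U 0 1 2 2 = 0 := by
    have h := hUtr 0 1
    rw [Fin.sum_univ_three] at h
    try simp only [u0010, u0020, u0021, u0100, u0101, u0102, u0110, u0120, u0121, u0200, u0201, u0202, u0210, u0211, u0212, u0220, u0221, u1000, u1001, u1002, u1010, u1011, u1012, u1020, u1021, u1022, u1100, u1101, u1102, u1110, u1120, u1121, u1200, u1201, u1202, u1210, u1211, u1212, u1220, u1221, u2000, u2001, u2002, u2010, u2011, u2012, u2020, u2021, u2022, u2100, u2101, u2102, u2110, u2111, u2112, u2120, u2121, u2122, u2200, u2201, u2202, u2210, u2211, u2212, u2220, u2221] at h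
    linear_combination h
  have ctr02 : U 0 0 0 2 + U 0 1 1 2 + U 0 2 2 2 = 0 := by
    have h := hUtr 0 2
    rw [Fin.sum_univ_three] at h
    try simp only [u0010, u0020, u0021, u0100, u0101, u0102, u0110, u0120, u0121, u0200, u0201, u0202, u0210, u0211, u0212, u0220, u0221, u1000, u1001, u1002, u1010, u1011, u1012, u1020, u1021, u1022, u1100, u1101, u1102, u1110, u1120, u1121, u1200, u1201, u1202, u1210, u1211, u1212, u1220, u1221, u2000, u2001, u2002, u2010, u2011, u2012, u2020, u2021, u2022, u2100, u2101, u2102, u2110, u2111, u2112, u2120, u2121, u2122, u2200, u2201, u2202, u2210, u2211, u2212, u2220, u2221] at h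
    linear_combination h
  have ctr10 : U 0 0 0 1 + U 0 1 1 1 + U 0 1 2 2 = 0 := by
    have h := hUtr 1 0
    rw [Fin.sum_univ_three] at h
    try simp only [u0010, u0020, u0021, u0100, u0101, u0102, u0110, u0120, u0121, u0200, u0201, u0202, u0210, u0211, u0212, u0220, u0221, u1000, u1001, u1002, u1010, u1011, u1012, u1020, u1021, u1022, u1100, u1101, u1102, u1110, u1120, u1121, u1200, u1201, u1202, u1210, u1211, u1212, u1220, u1221, u2000, u2001, u2002, u2010, u2011, u2012, u2020, u2021, u2022, u2100, u2101, u2102, u2110, u2111, u2112, u2120, u2121, u2122, u2200, u2201, u2202, u2210, u2211, u2212, u2220, u2221] at h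
    linear_combination h
  have ctr11 : U 0 0 1 1 + U 1 1 1 1 + U 1 1 2 2 = 0 := by
    have h := hUtr 1 1
    rw [Fin.sum_univ_three] at h
    try simp only [u0010, u0020, u0021, u0100, u0101, u0102, u0110, u0120, u0121, u0200, u0201, u0202, u0210, u0211, u0212, u0220, u0221, u1000, u1001, u1002, u1010, u1011, u1012, u1020, u1021, u1022, u1100, u1101, u1102, u1110, u1120, u1121, u1200, u1201, u1202, u1210, u1211, u1212, u1220, u1221, u2000, u2001, u2002, u2010, u2011, u2012, u2020, u2021, u2022, u2100, u2101, u2102, u2110, u2111, u2112, u2120, u2121, u2122, u2200, u2201, u2202, u2210, u2211, u2212, u2220, u2221] at h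
    linear_combination h
  have ctr12 : U 0 0 1 2 + U 1 1 1 2 + U 1 2 2 2 = 0 := by
    have h := hUtr 1 2
    rw [Fin.sum_univ_three] at h
    try simp only [u0010, u0020, u0021, u0100, u0101, u0102, u0110, u0120, u0121, u0200, u0201, u0202, u0210, u0211, u0212, u0220, u0221, u1000, u1001, u1002, u1010, u1011, u1012, u1020, u1021, u1022, u1100, u1101, u1102, u1110, u1120, u1121, u1200, u1201, u1202, u1210, u1211, u1212, u1220, u1221, u2000, u2001, u2002, u2010, u2011, u2012, u2020, u2021, u2022, u2100, u2101, u2102, u2110, u2111, u2112, u2120, u2121, u2122, u2200, u2201, u2202, u2210, u2211, u2212, u2220, u2221] at h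
    linear_combination h
  have ctr20 : U 0 0 0 2 + U 0 1 1 2 + U 0 2 2 2 = 0 := by
    have h := hUtr 2 0
    rw [Fin.sum_univ_three] at h
    try simp only [u0010, u0020, u0021, u0100, u0101, u0102, u0110, u0120, u0121, u0200, u0201, u0202, u0210, u0211, u0212, u0220, u0221, u1000, u1001, u1002, u1010, u1011, u1012, u1020, u1021, u1022, u1100, u1101, u1102, u1110, u1120, u1121, u1200, u1201, u1202, u1210, u1211, u1212, u1220, u1221, u2000, u2001, u2002, u2010, u2011, u2012, u2020, u2021, u2022, u2100, u2101, u2102, u2110, u2111, u2112, u2120, u2121, u2122, u2200, u2201, u2202, u2210, u2211, u2212, u2220, u2221] at h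
    linear_combination h
  have ctr21 : U 0 0 1 2 + U 1 1 1 2 + U 1 2 2 2 = 0 := by
    have h := hUtr 2 1
    rw [Fin.sum_univ_three] at h
    try simp only [u0010, u0020, u0021, u0100, u0101, u0102, u0110, u0120, u0121, u0200, u0201, u0202, u0210, u0211, u0212, u0220, u0221, u1000, u1001, u1002, u1010, u1011, u1012, u1020, u1021, u1022, u1100, u1101, u1102, u1110, u1120, u1121, u1200, u1201, u1202, u1210, u1211, u1212, u1220, u1221, u2000, u2001, u2002, u2010, u2011, u2012, u2020, u2021, u2022, u2100, u2101, u2102, u2110, u2111, u2112, u2120, u2121, u2122, u2200, u2201, u2202, u2210, u2211, u2212, u2220, u2221] at h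
    linear_combination h
  have ctr22 : U 0 0 2 2 + U 1 1 2 2 + U 2 2 2 2 = 0 := by
    have h := hUtr 2 2
    rw [Fin.sum_univ_three] at h
    try simp only [u0010, u0020, u0021, u0100, u0101, u0102, u0110, u0120, u0121, u0200, u0201, u0202, u0210, u0211, u0212, u0220, u0221, u1000, u1001, u1002, u1010, u1011, u1012, u1020, u1021, u1022, u1100, u1101, u1102, u1110, u1120, u1121, u1200, u1201, u1202, u1210, u1211, u1212, u1220, u1221, u2000, u2001, u2002, u2010, u2011, u2012, u2020, u2021, u2022, u2100, u2101, u2102, u2110, u2111, u2112, u2120, u2121, u2122, u2200, u2201, u2202, u2210, u2211, u2212, u2220, u2221] at h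
    linear_combination h
  simp (config := { decide := true }) only [idSym, kd, Fin.sum_univ_three, if_true, if_false,
    mul_zero, zero_mul, mul_one, one_mul, add_zero, zero_add]
  simp only [u0010, u0020, u0021, u0100, u0101, u0102, u0110, u0120, u0121, u0200, u0201, u0202, u0210, u0211, u0212, u0220, u0221, u1000, u1001, u1002, u1010, u1011, u1012, u1020, u1021, u1022, u1100, u1101, u1102, u1110, u1120, u1121, u1200, u1201, u1202, u1210, u1211, u1212, u1220, u1221, u2000, u2001, u2002, u2010, u2011, u2012, u2020, u2021, u2022, u2100, u2101, u2102, u2110, u2111, u2112, u2120, u2121, u2122, u2200, u2201, u2202, u2210, u2211, u2212, u2220, u2221]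
  linear_combination a 0 0 * ctr00 + a 0 1 * ctr01 + a 0 2 * ctr02 + a 1 0 * ctr10 + a 1 1 * ctr11 + a 1 2 * ctr12 + a 2 0 * ctr20 + a 2 1 * ctr21 + a 2 2 * ctr22

lemma deriv_quad (A B C : ℝ) :
    deriv (fun t : ℝ => 1 / 2 * (A + B * t + C * t ^ 2)) 0 = 1 / 2 * B := by
  have hb : HasDerivAt (fun t : ℝ => B * t) B 0 := by
    simpa using (hasDerivAt_id (0 : ℝ)).const_mul B
  have hc : HasDerivAt (fun t : ℝ => C * t ^ 2) 0 0 := by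
    simpa using (hasDerivAt_pow 2 (0 : ℝ)).const_mul C
  have h := (((hasDerivAt_const (0 : ℝ) A).add hb).add hc).const_mul (1 / 2 : ℝ)
  simpa using h.deriv

set_option maxHeartbeats 4000000 in
/-- `S(λ)` is the gradient of `H ↦ (1/2) λ : d₂'(H)`: for every
harmonic fourth-order direction `δH`,
`d/dt|₀ (1/2) λ : d₂'(H + t δH) = S(λ) :: δH`. -/
theorem Sten_is_gradient
    (H δH : T4) (hH : TotSymm H) (hHtr : Traceless4 H)
    (hδ : TotSymm δH) (hδtr : Traceless4 δH)
    (lam : Fin 3 → Fin 3 → ℝ) (hls : ∀ i j, lam i j = lam j i)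
    (hltr : ∑ i : Fin 3, lam i i = 0) :
    deriv (fun t : ℝ =>
        (1 / 2) * ∑ i : Fin 3, ∑ j : Fin 3,
          lam i j * dev (d2 (fun i' j' k' l' => H i' j' k' l' + t * δH i' j' k' l')) i j) 0
      = ∑ i : Fin 3, ∑ j : Fin 3, ∑ k : Fin 3, ∑ l : Fin 3,
          Sten H lam i j k l * δH i j k l := by
  have hdev : ∀ a : Fin 3 → Fin 3 → ℝ,
      (∑ i : Fin 3, ∑ j : Fin 3, lam i j * dev a i j)
        = ∑ i : Fin 3, ∑ j : Fin 3, lam i j * a i j := by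
    intro a
    have h := hltr
    rw [Fin.sum_univ_three] at h
    simp (config := { decide := true }) only [dev, kd, Fin.sum_univ_three, if_true, if_false,
      mul_zero, zero_mul, mul_one, one_mul, add_zero, zero_add]
    linear_combination (-(a 0 0 + a 1 1 + a 2 2) / 3) * h
  have hd2 : ∀ (t : ℝ) (i j : Fin 3),
      d2 (fun i' j' k' l' => H i' j' k' l' + t * δH i' j' k' l') i j
        = d2 H i j
          + (∑ p : Fin 3, ∑ q : Fin 3, ∑ r : Fin 3,
              (H i p q r * δH p q r j + δH i p q r * H p q r j)) * t
          + d2 δH i j * t ^ 2 := by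
    intro t i j
    simp only [d2, Fin.sum_univ_three]
    ring
  have hfun : (fun t : ℝ =>
        (1 / 2) * ∑ i : Fin 3, ∑ j : Fin 3,
          lam i j * dev (d2 (fun i' j' k' l' => H i' j' k' l' + t * δH i' j' k' l')) i j)
      = fun t : ℝ => 1 / 2 *
          ((∑ i : Fin 3, ∑ j : Fin 3, lam i j * d2 H i j)
            + (∑ i : Fin 3, ∑ j : Fin 3, ∑ p : Fin 3, ∑ q : Fin 3, ∑ r : Fin 3,
                lam i j * (H i p q r * δH p q r j + δH i p q r * H p q r j)) * t
            + (∑ i : Fin 3, ∑ j : Fin 3, lam i j * d2 δH i j) * t ^ 2) := by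
    funext t
    rw [hdev]
    simp only [hd2]
    simp only [Fin.sum_univ_three]
    ring
  rw [hfun, deriv_quad]
  have hR : (∑ i : Fin 3, ∑ j : Fin 3, ∑ k : Fin 3, ∑ l : Fin 3,
        Sten H lam i j k l * δH i j k l)
      = ∑ i : Fin 3, ∑ j : Fin 3, ∑ k : Fin 3, ∑ l : Fin 3,
          mulR H lam i j k l * δH i j k l := by
    have h1 := contract_tsym (mulR H lam) δH hδ
    have h2 := idsym_contract (dc H lam) δH hδ hδtr
    have hsplit : ∀ i j k l : Fin 3, Sten H lam i j k l * δH i j k l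
        = tsym (mulR H lam) i j k l * δH i j k l
          - 3 / 7 * (idSym (dc H lam) i j k l * δH i j k l) := by
      intro i j k l
      simp only [Sten]
      ring
    simp only [hsplit]
    simp only [Finset.sum_sub_distrib, ← Finset.mul_sum]
    rw [h1, h2]
    ring
  rw [hR]
  simp only [mulR, Fin.sum_univ_three]
  have hh0010 : H 0 0 1 0 = H 0 0 0 1 := by rw [(hH 0 0 1 0).2.2.1]
  have hh0020 : H 0 0 2 0 = H 0 0 0 2 := by rw [(hH 0 0 2 0).2.2.1]
  have hh0021 : H 0 0 2 1 = H 0 0 1 2 := by rw [(hH 0 0 2 1).2.2.1]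
  have hh0100 : H 0 1 0 0 = H 0 0 0 1 := by rw [(hH 0 1 0 0).2.1, (hH 0 0 1 0).2.2.1]
  have hh0101 : H 0 1 0 1 = H 0 0 1 1 := by rw [(hH 0 1 0 1).2.1]
  have hh0102 : H 0 1 0 2 = H 0 0 1 2 := by rw [(hH 0 1 0 2).2.1]
  have hh0110 : H 0 1 1 0 = H 0 0 1 1 := by rw [(hH 0 1 1 0).2.2.1, (hH 0 1 0 1).2.1]
  have hh0120 : H 0 1 2 0 = H 0 0 1 2 := by rw [(hH 0 1 2 0).2.2.1, (hH 0 1 0 2).2.1]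
  have hh0121 : H 0 1 2 1 = H 0 1 1 2 := by rw [(hH 0 1 2 1).2.2.1]
  have hh0200 : H 0 2 0 0 = H 0 0 0 2 := by rw [(hH 0 2 0 0).2.1, (hH 0 0 2 0).2.2.1]
  have hh0201 : H 0 2 0 1 = H 0 0 1 2 := by rw [(hH 0 2 0 1).2.1, (hH 0 0 2 1).2.2.1]
  have hh0202 : H 0 2 0 2 = H 0 0 2 2 := by rw [(hH 0 2 0 2).2.1]
  have hh0210 : H 0 2 1 0 = H 0 0 1 2 := by rw [(hH 0 2 1 0).2.1, (hH 0 1 2 0).2.2.1, (hH 0 1 0 2).2.1]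
  have hh0211 : H 0 2 1 1 = H 0 1 1 2 := by rw [(hH 0 2 1 1).2.1, (hH 0 1 2 1).2.2.1]
  have hh0212 : H 0 2 1 2 = H 0 1 2 2 := by rw [(hH 0 2 1 2).2.1]
  have hh0220 : H 0 2 2 0 = H 0 0 2 2 := by rw [(hH 0 2 2 0).2.2.1, (hH 0 2 0 2).2.1]
  have hh0221 : H 0 2 2 1 = H 0 1 2 2 := by rw [(hH 0 2 2 1).2.2.1, (hH 0 2 1 2).2.1]
  have hh1000 : H 1 0 0 0 = H 0 0 0 1 := by rw [(hH 1 0 0 0).1, (hH 0 1 0 0).2.1, (hH 0 0 1 0).2.2.1]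
  have hh1001 : H 1 0 0 1 = H 0 0 1 1 := by rw [(hH 1 0 0 1).1, (hH 0 1 0 1).2.1]
  have hh1002 : H 1 0 0 2 = H 0 0 1 2 := by rw [(hH 1 0 0 2).1, (hH 0 1 0 2).2.1]
  have hh1010 : H 1 0 1 0 = H 0 0 1 1 := by rw [(hH 1 0 1 0).1, (hH 0 1 1 0).2.2.1, (hH 0 1 0 1).2.1]
  have hh1011 : H 1 0 1 1 = H 0 1 1 1 := by rw [(hH 1 0 1 1).1]
  have hh1012 : H 1 0 1 2 = H 0 1 1 2 := by rw [(hH 1 0 1 2).1]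
  have hh1020 : H 1 0 2 0 = H 0 0 1 2 := by rw [(hH 1 0 2 0).1, (hH 0 1 2 0).2.2.1, (hH 0 1 0 2).2.1]
  have hh1021 : H 1 0 2 1 = H 0 1 1 2 := by rw [(hH 1 0 2 1).1, (hH 0 1 2 1).2.2.1]
  have hh1022 : H 1 0 2 2 = H 0 1 2 2 := by rw [(hH 1 0 2 2).1]
  have hh1100 : H 1 1 0 0 = H 0 0 1 1 := by rw [(hH 1 1 0 0).2.1, (hH 1 0 1 0).2.2.1, (hH 1 0 0 1).1, (hH 0 1 0 1).2.1]
  have hh1101 : H 1 1 0 1 = H 0 1 1 1 := by rw [(hH 1 1 0 1).2.1, (hH 1 0 1 1).1]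
  have hh1102 : H 1 1 0 2 = H 0 1 1 2 := by rw [(hH 1 1 0 2).2.1, (hH 1 0 1 2).1]
  have hh1110 : H 1 1 1 0 = H 0 1 1 1 := by rw [(hH 1 1 1 0).2.2.1, (hH 1 1 0 1).2.1, (hH 1 0 1 1).1]
  have hh1120 : H 1 1 2 0 = H 0 1 1 2 := by rw [(hH 1 1 2 0).2.2.1, (hH 1 1 0 2).2.1, (hH 1 0 1 2).1]
  have hh1121 : H 1 1 2 1 = H 1 1 1 2 := by rw [(hH 1 1 2 1).2.2.1]
  have hh1200 : H 1 2 0 0 = H 0 0 1 2 := by rw [(hH 1 2 0 0).2.1, (hH 1 0 2 0).2.2.1, (hH 1 0 0 2).1, (hH 0 1 0 2).2.1]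
  have hh1201 : H 1 2 0 1 = H 0 1 1 2 := by rw [(hH 1 2 0 1).2.1, (hH 1 0 2 1).2.2.1, (hH 1 0 1 2).1]
  have hh1202 : H 1 2 0 2 = H 0 1 2 2 := by rw [(hH 1 2 0 2).2.1, (hH 1 0 2 2).1]
  have hh1210 : H 1 2 1 0 = H 0 1 1 2 := by rw [(hH 1 2 1 0).2.1, (hH 1 1 2 0).2.2.1, (hH 1 1 0 2).2.1, (hH 1 0 1 2).1]
  have hh1211 : H 1 2 1 1 = H 1 1 1 2 := by rw [(hH 1 2 1 1).2.1, (hH 1 1 2 1).2.2.1]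
  have hh1212 : H 1 2 1 2 = H 1 1 2 2 := by rw [(hH 1 2 1 2).2.1]
  have hh1220 : H 1 2 2 0 = H 0 1 2 2 := by rw [(hH 1 2 2 0).2.2.1, (hH 1 2 0 2).2.1, (hH 1 0 2 2).1]
  have hh1221 : H 1 2 2 1 = H 1 1 2 2 := by rw [(hH 1 2 2 1).2.2.1, (hH 1 2 1 2).2.1]
  have hh2000 : H 2 0 0 0 = H 0 0 0 2 := by rw [(hH 2 0 0 0).1, (hH 0 2 0 0).2.1, (hH 0 0 2 0).2.2.1]
  have hh2001 : H 2 0 0 1 = H 0 0 1 2 := by rw [(hH 2 0 0 1).1, (hH 0 2 0 1).2.1, (hH 0 0 2 1).2.2.1]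
  have hh2002 : H 2 0 0 2 = H 0 0 2 2 := by rw [(hH 2 0 0 2).1, (hH 0 2 0 2).2.1]
  have hh2010 : H 2 0 1 0 = H 0 0 1 2 := by rw [(hH 2 0 1 0).1, (hH 0 2 1 0).2.1, (hH 0 1 2 0).2.2.1, (hH 0 1 0 2).2.1]
  have hh2011 : H 2 0 1 1 = H 0 1 1 2 := by rw [(hH 2 0 1 1).1, (hH 0 2 1 1).2.1, (hH 0 1 2 1).2.2.1]
  have hh2012 : H 2 0 1 2 = H 0 1 2 2 := by rw [(hH 2 0 1 2).1, (hH 0 2 1 2).2.1]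
  have hh2020 : H 2 0 2 0 = H 0 0 2 2 := by rw [(hH 2 0 2 0).1, (hH 0 2 2 0).2.2.1, (hH 0 2 0 2).2.1]
  have hh2021 : H 2 0 2 1 = H 0 1 2 2 := by rw [(hH 2 0 2 1).1, (hH 0 2 2 1).2.2.1, (hH 0 2 1 2).2.1]
  have hh2022 : H 2 0 2 2 = H 0 2 2 2 := by rw [(hH 2 0 2 2).1]
  have hh2100 : H 2 1 0 0 = H 0 0 1 2 := by rw [(hH 2 1 0 0).1, (hH 1 2 0 0).2.1, (hH 1 0 2 0).2.2.1, (hH 1 0 0 2).1, (hH 0 1 0 2).2.1]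
  have hh2101 : H 2 1 0 1 = H 0 1 1 2 := by rw [(hH 2 1 0 1).1, (hH 1 2 0 1).2.1, (hH 1 0 2 1).2.2.1, (hH 1 0 1 2).1]
  have hh2102 : H 2 1 0 2 = H 0 1 2 2 := by rw [(hH 2 1 0 2).1, (hH 1 2 0 2).2.1, (hH 1 0 2 2).1]
  have hh2110 : H 2 1 1 0 = H 0 1 1 2 := by rw [(hH 2 1 1 0).1, (hH 1 2 1 0).2.1, (hH 1 1 2 0).2.2.1, (hH 1 1 0 2).2.1, (hH 1 0 1 2).1]
  have hh2111 : H 2 1 1 1 = H 1 1 1 2 := by rw [(hH 2 1 1 1).1, (hH 1 2 1 1).2.1, (hH 1 1 2 1).2.2.1]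
  have hh2112 : H 2 1 1 2 = H 1 1 2 2 := by rw [(hH 2 1 1 2).1, (hH 1 2 1 2).2.1]
  have hh2120 : H 2 1 2 0 = H 0 1 2 2 := by rw [(hH 2 1 2 0).1, (hH 1 2 2 0).2.2.1, (hH 1 2 0 2).2.1, (hH 1 0 2 2).1]
  have hh2121 : H 2 1 2 1 = H 1 1 2 2 := by rw [(hH 2 1 2 1).1, (hH 1 2 2 1).2.2.1, (hH 1 2 1 2).2.1]
  have hh2122 : H 2 1 2 2 = H 1 2 2 2 := by rw [(hH 2 1 2 2).1]
  have hh2200 : H 2 2 0 0 = H 0 0 2 2 := by rw [(hH 2 2 0 0).2.1, (hH 2 0 2 0).2.2.1, (hH 2 0 0 2).1, (hH 0 2 0 2).2.1]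
  have hh2201 : H 2 2 0 1 = H 0 1 2 2 := by rw [(hH 2 2 0 1).2.1, (hH 2 0 2 1).2.2.1, (hH 2 0 1 2).1, (hH 0 2 1 2).2.1]
  have hh2202 : H 2 2 0 2 = H 0 2 2 2 := by rw [(hH 2 2 0 2).2.1, (hH 2 0 2 2).1]
  have hh2210 : H 2 2 1 0 = H 0 1 2 2 := by rw [(hH 2 2 1 0).2.1, (hH 2 1 2 0).2.2.1, (hH 2 1 0 2).1, (hH 1 2 0 2).2.1, (hH 1 0 2 2).1]
  have hh2211 : H 2 2 1 1 = H 1 1 2 2 := by rw [(hH 2 2 1 1).2.1, (hH 2 1 2 1).2.2.1, (hH 2 1 1 2).1, (hH 1 2 1 2).2.1]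
  have hh2212 : H 2 2 1 2 = H 1 2 2 2 := by rw [(hH 2 2 1 2).2.1, (hH 2 1 2 2).1]
  have hh2220 : H 2 2 2 0 = H 0 2 2 2 := by rw [(hH 2 2 2 0).2.2.1, (hH 2 2 0 2).2.1, (hH 2 0 2 2).1]
  have hh2221 : H 2 2 2 1 = H 1 2 2 2 := by rw [(hH 2 2 2 1).2.2.1, (hH 2 2 1 2).2.1, (hH 2 1 2 2).1]
  have dd0010 : δH 0 0 1 0 = δH 0 0 0 1 := by rw [(hδ 0 0 1 0).2.2.1]
  have dd0020 : δH 0 0 2 0 = δH 0 0 0 2 := by rw [(hδ 0 0 2 0).2.2.1]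
  have dd0021 : δH 0 0 2 1 = δH 0 0 1 2 := by rw [(hδ 0 0 2 1).2.2.1]
  have dd0100 : δH 0 1 0 0 = δH 0 0 0 1 := by rw [(hδ 0 1 0 0).2.1, (hδ 0 0 1 0).2.2.1]
  have dd0101 : δH 0 1 0 1 = δH 0 0 1 1 := by rw [(hδ 0 1 0 1).2.1]
  have dd0102 : δH 0 1 0 2 = δH 0 0 1 2 := by rw [(hδ 0 1 0 2).2.1]
  have dd0110 : δH 0 1 1 0 = δH 0 0 1 1 := by rw [(hδ 0 1 1 0).2.2.1, (hδ 0 1 0 1).2.1]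
  have dd0120 : δH 0 1 2 0 = δH 0 0 1 2 := by rw [(hδ 0 1 2 0).2.2.1, (hδ 0 1 0 2).2.1]
  have dd0121 : δH 0 1 2 1 = δH 0 1 1 2 := by rw [(hδ 0 1 2 1).2.2.1]
  have dd0200 : δH 0 2 0 0 = δH 0 0 0 2 := by rw [(hδ 0 2 0 0).2.1, (hδ 0 0 2 0).2.2.1]
  have dd0201 : δH 0 2 0 1 = δH 0 0 1 2 := by rw [(hδ 0 2 0 1).2.1, (hδ 0 0 2 1).2.2.1]
  have dd0202 : δH 0 2 0 2 = δH 0 0 2 2 := by rw [(hδ 0 2 0 2).2.1]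
  have dd0210 : δH 0 2 1 0 = δH 0 0 1 2 := by rw [(hδ 0 2 1 0).2.1, (hδ 0 1 2 0).2.2.1, (hδ 0 1 0 2).2.1]
  have dd0211 : δH 0 2 1 1 = δH 0 1 1 2 := by rw [(hδ 0 2 1 1).2.1, (hδ 0 1 2 1).2.2.1]
  have dd0212 : δH 0 2 1 2 = δH 0 1 2 2 := by rw [(hδ 0 2 1 2).2.1]
  have dd0220 : δH 0 2 2 0 = δH 0 0 2 2 := by rw [(hδ 0 2 2 0).2.2.1, (hδ 0 2 0 2).2.1]
  have dd0221 : δH 0 2 2 1 = δH 0 1 2 2 := by rw [(hδ 0 2 2 1).2.2.1, (hδ 0 2 1 2).2.1]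
  have dd1000 : δH 1 0 0 0 = δH 0 0 0 1 := by rw [(hδ 1 0 0 0).1, (hδ 0 1 0 0).2.1, (hδ 0 0 1 0).2.2.1]
  have dd1001 : δH 1 0 0 1 = δH 0 0 1 1 := by rw [(hδ 1 0 0 1).1, (hδ 0 1 0 1).2.1]
  have dd1002 : δH 1 0 0 2 = δH 0 0 1 2 := by rw [(hδ 1 0 0 2).1, (hδ 0 1 0 2).2.1]
  have dd1010 : δH 1 0 1 0 = δH 0 0 1 1 := by rw [(hδ 1 0 1 0).1, (hδ 0 1 1 0).2.2.1, (hδ 0 1 0 1).2.1]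
  have dd1011 : δH 1 0 1 1 = δH 0 1 1 1 := by rw [(hδ 1 0 1 1).1]
  have dd1012 : δH 1 0 1 2 = δH 0 1 1 2 := by rw [(hδ 1 0 1 2).1]
  have dd1020 : δH 1 0 2 0 = δH 0 0 1 2 := by rw [(hδ 1 0 2 0).1, (hδ 0 1 2 0).2.2.1, (hδ 0 1 0 2).2.1]
  have dd1021 : δH 1 0 2 1 = δH 0 1 1 2 := by rw [(hδ 1 0 2 1).1, (hδ 0 1 2 1).2.2.1]
  have dd1022 : δH 1 0 2 2 = δH 0 1 2 2 := by rw [(hδ 1 0 2 2).1]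
  have dd1100 : δH 1 1 0 0 = δH 0 0 1 1 := by rw [(hδ 1 1 0 0).2.1, (hδ 1 0 1 0).2.2.1, (hδ 1 0 0 1).1, (hδ 0 1 0 1).2.1]
  have dd1101 : δH 1 1 0 1 = δH 0 1 1 1 := by rw [(hδ 1 1 0 1).2.1, (hδ 1 0 1 1).1]
  have dd1102 : δH 1 1 0 2 = δH 0 1 1 2 := by rw [(hδ 1 1 0 2).2.1, (hδ 1 0 1 2).1]
  have dd1110 : δH 1 1 1 0 = δH 0 1 1 1 := by rw [(hδ 1 1 1 0).2.2.1, (hδ 1 1 0 1).2.1, (hδ 1 0 1 1).1]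
  have dd1120 : δH 1 1 2 0 = δH 0 1 1 2 := by rw [(hδ 1 1 2 0).2.2.1, (hδ 1 1 0 2).2.1, (hδ 1 0 1 2).1]
  have dd1121 : δH 1 1 2 1 = δH 1 1 1 2 := by rw [(hδ 1 1 2 1).2.2.1]
  have dd1200 : δH 1 2 0 0 = δH 0 0 1 2 := by rw [(hδ 1 2 0 0).2.1, (hδ 1 0 2 0).2.2.1, (hδ 1 0 0 2).1, (hδ 0 1 0 2).2.1]
  have dd1201 : δH 1 2 0 1 = δH 0 1 1 2 := by rw [(hδ 1 2 0 1).2.1, (hδ 1 0 2 1).2.2.1, (hδ 1 0 1 2).1]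
  have dd1202 : δH 1 2 0 2 = δH 0 1 2 2 := by rw [(hδ 1 2 0 2).2.1, (hδ 1 0 2 2).1]
  have dd1210 : δH 1 2 1 0 = δH 0 1 1 2 := by rw [(hδ 1 2 1 0).2.1, (hδ 1 1 2 0).2.2.1, (hδ 1 1 0 2).2.1, (hδ 1 0 1 2).1]
  have dd1211 : δH 1 2 1 1 = δH 1 1 1 2 := by rw [(hδ 1 2 1 1).2.1, (hδ 1 1 2 1).2.2.1]
  have dd1212 : δH 1 2 1 2 = δH 1 1 2 2 := by rw [(hδ 1 2 1 2).2.1]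
  have dd1220 : δH 1 2 2 0 = δH 0 1 2 2 := by rw [(hδ 1 2 2 0).2.2.1, (hδ 1 2 0 2).2.1, (hδ 1 0 2 2).1]
  have dd1221 : δH 1 2 2 1 = δH 1 1 2 2 := by rw [(hδ 1 2 2 1).2.2.1, (hδ 1 2 1 2).2.1]
  have dd2000 : δH 2 0 0 0 = δH 0 0 0 2 := by rw [(hδ 2 0 0 0).1, (hδ 0 2 0 0).2.1, (hδ 0 0 2 0).2.2.1]
  have dd2001 : δH 2 0 0 1 = δH 0 0 1 2 := by rw [(hδ 2 0 0 1).1, (hδ 0 2 0 1).2.1, (hδ 0 0 2 1).2.2.1]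
  have dd2002 : δH 2 0 0 2 = δH 0 0 2 2 := by rw [(hδ 2 0 0 2).1, (hδ 0 2 0 2).2.1]
  have dd2010 : δH 2 0 1 0 = δH 0 0 1 2 := by rw [(hδ 2 0 1 0).1, (hδ 0 2 1 0).2.1, (hδ 0 1 2 0).2.2.1, (hδ 0 1 0 2).2.1]
  have dd2011 : δH 2 0 1 1 = δH 0 1 1 2 := by rw [(hδ 2 0 1 1).1, (hδ 0 2 1 1).2.1, (hδ 0 1 2 1).2.2.1]
  have dd2012 : δH 2 0 1 2 = δH 0 1 2 2 := by rw [(hδ 2 0 1 2).1, (hδ 0 2 1 2).2.1]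
  have dd2020 : δH 2 0 2 0 = δH 0 0 2 2 := by rw [(hδ 2 0 2 0).1, (hδ 0 2 2 0).2.2.1, (hδ 0 2 0 2).2.1]
  have dd2021 : δH 2 0 2 1 = δH 0 1 2 2 := by rw [(hδ 2 0 2 1).1, (hδ 0 2 2 1).2.2.1, (hδ 0 2 1 2).2.1]
  have dd2022 : δH 2 0 2 2 = δH 0 2 2 2 := by rw [(hδ 2 0 2 2).1]
  have dd2100 : δH 2 1 0 0 = δH 0 0 1 2 := by rw [(hδ 2 1 0 0).1, (hδ 1 2 0 0).2.1, (hδ 1 0 2 0).2.2.1, (hδ 1 0 0 2).1, (hδ 0 1 0 2).2.1]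
  have dd2101 : δH 2 1 0 1 = δH 0 1 1 2 := by rw [(hδ 2 1 0 1).1, (hδ 1 2 0 1).2.1, (hδ 1 0 2 1).2.2.1, (hδ 1 0 1 2).1]
  have dd2102 : δH 2 1 0 2 = δH 0 1 2 2 := by rw [(hδ 2 1 0 2).1, (hδ 1 2 0 2).2.1, (hδ 1 0 2 2).1]
  have dd2110 : δH 2 1 1 0 = δH 0 1 1 2 := by rw [(hδ 2 1 1 0).1, (hδ 1 2 1 0).2.1, (hδ 1 1 2 0).2.2.1, (hδ 1 1 0 2).2.1, (hδ 1 0 1 2).1]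
  have dd2111 : δH 2 1 1 1 = δH 1 1 1 2 := by rw [(hδ 2 1 1 1).1, (hδ 1 2 1 1).2.1, (hδ 1 1 2 1).2.2.1]
  have dd2112 : δH 2 1 1 2 = δH 1 1 2 2 := by rw [(hδ 2 1 1 2).1, (hδ 1 2 1 2).2.1]
  have dd2120 : δH 2 1 2 0 = δH 0 1 2 2 := by rw [(hδ 2 1 2 0).1, (hδ 1 2 2 0).2.2.1, (hδ 1 2 0 2).2.1, (hδ 1 0 2 2).1]
  have dd2121 : δH 2 1 2 1 = δH 1 1 2 2 := by rw [(hδ 2 1 2 1).1, (hδ 1 2 2 1).2.2.1, (hδ 1 2 1 2).2.1]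
  have dd2122 : δH 2 1 2 2 = δH 1 2 2 2 := by rw [(hδ 2 1 2 2).1]
  have dd2200 : δH 2 2 0 0 = δH 0 0 2 2 := by rw [(hδ 2 2 0 0).2.1, (hδ 2 0 2 0).2.2.1, (hδ 2 0 0 2).1, (hδ 0 2 0 2).2.1]
  have dd2201 : δH 2 2 0 1 = δH 0 1 2 2 := by rw [(hδ 2 2 0 1).2.1, (hδ 2 0 2 1).2.2.1, (hδ 2 0 1 2).1, (hδ 0 2 1 2).2.1]
  have dd2202 : δH 2 2 0 2 = δH 0 2 2 2 := by rw [(hδ 2 2 0 2).2.1, (hδ 2 0 2 2).1]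
  have dd2210 : δH 2 2 1 0 = δH 0 1 2 2 := by rw [(hδ 2 2 1 0).2.1, (hδ 2 1 2 0).2.2.1, (hδ 2 1 0 2).1, (hδ 1 2 0 2).2.1, (hδ 1 0 2 2).1]
  have dd2211 : δH 2 2 1 1 = δH 1 1 2 2 := by rw [(hδ 2 2 1 1).2.1, (hδ 2 1 2 1).2.2.1, (hδ 2 1 1 2).1, (hδ 1 2 1 2).2.1]
  have dd2212 : δH 2 2 1 2 = δH 1 2 2 2 := by rw [(hδ 2 2 1 2).2.1, (hδ 2 1 2 2).1]
  have dd2220 : δH 2 2 2 0 = δH 0 2 2 2 := by rw [(hδ 2 2 2 0).2.2.1, (hδ 2 2 0 2).2.1, (hδ 2 0 2 2).1]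
  have dd2221 : δH 2 2 2 1 = δH 1 2 2 2 := by rw [(hδ 2 2 2 1).2.2.1, (hδ 2 2 1 2).2.1, (hδ 2 1 2 2).1]
  have lm10 : lam 1 0 = lam 0 1 := hls 1 0
  have lm20 : lam 2 0 = lam 0 2 := hls 2 0
  have lm21 : lam 2 1 = lam 1 2 := hls 2 1
  simp only [hh0010, hh0020, hh0021, hh0100, hh0101, hh0102, hh0110, hh0120, hh0121, hh0200, hh0201, hh0202, hh0210, hh0211, hh0212, hh0220, hh0221, hh1000, hh1001, hh1002, hh1010, hh1011, hh1012, hh1020, hh1021, hh1022, hh1100, hh1101, hh1102, hh1110, hh1120, hh1121, hh1200, hh1201, hh1202, hh1210, hh1211, hh1212, hh1220, hh1221, hh2000, hh2001, hh2002, hh2010, hh2011, hh2012, hh2020, hh2021, hh2022, hh2100, hh2101, hh2102, hh2110, hh2111, hh2112, hh2120, hh2121, hh2122, hh2200, hh2201, hh2202, hh2210, hh2211, hh2212, hh2220, hh2221, dd0010, dd0020, dd0021, dd0100, dd0101, dd0102, dd0110, dd0120, dd0121, dd0200, dd0201, dd0202, dd0210, dd0211, dd0212, dd0220, dd0221, dd1000,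 dd1001, dd1002, dd1010, dd1011, dd1012, dd1020, dd1021, dd1022, dd1100, dd1101, dd1102, dd1110, dd1120, dd1121, dd1200, dd1201, dd1202, dd1210, dd1211, dd1212, dd1220, dd1221, dd2000, dd2001, dd2002, dd2010, dd2011, dd2012, dd2020, dd2021, dd2022, dd2100, dd2101, dd2102, dd2110, dd2111, dd2112, dd2120, dd2121, dd2122, dd2200, dd2201, dd2202, dd2210, dd2211, dd2212, dd2220, dd2221, lm10, lm20, lm21]
  ring
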